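/- Let G ≤ Aut(T) be a regular branch group over K. Then for every n ∈ ℕ, the image of Stab_G(n) under ψ_n contains K^{d^n} = {(k_v)_v : each k_v ∈ K} and is a subgroup of finite index in G^{d^n} ≤ Aut(T)^{d^n}. -/

import Mathlib

/-- Vertices of the `d`-regular rooted tree: finite words over `Fin d`. -/
abbrev Vtx (d : ℕ) := List (Fin d)

/-- A permutation of the vertex set is a tree automorphism if it fixes the root and
maps children of a vertex to children of its image. -/
def IsTreeAut (d : ℕ) (g : Equiv.Perm (Vtx d)) : Prop :=
  g [] = [] ∧ ∀ (v : Vtx d) (x : Fin d), ∃ y : Fin d, g (v ++ [x]) = g v ++ [y]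

/-- The initial raySegment of length `n` of a boundary point `ξ : ℕ → Fin d`. -/
def raySegment {d : ℕ} (ξ : ℕ → Fin d) (n : ℕ) : Vtx d := List.ofFn fun i : Fin n => ξ i

/-- The vertices at level `n`. -/
abbrev Level (d n : ℕ) := {v : Vtx d // v.length = n}

/-- A group of tree automorphisms is spherically transitive if it acts transitively on
each level. -/
def SphericallyTransitive {d : ℕ} (G : Subgroup (Equiv.Perm (Vtx d))) : Prop :=
  ∀ u v : Vtx d, u.length = v.length → ∃ g ∈ G, g u = v

/-- A group of tree automorphisms is self-similar if all sections of its elements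
belong to it. -/
def SelfSimilar {d : ℕ} (G : Subgroup (Equiv.Perm (Vtx d))) : Prop :=
  ∀ g ∈ G, ∀ v : Vtx d, ∃ h ∈ G, ∀ w : Vtx d, g (v ++ w) = g v ++ h w

/-- The image of `H ∩ Stab(n)` under the map `ψₙ` sending an automorphism fixing level `n`
to the tuple of its sections at the vertices of level `n`. -/
def psiImage {d : ℕ} (H : Subgroup (Equiv.Perm (Vtx d))) (n : ℕ) :
    Subgroup (Level d n → Equiv.Perm (Vtx d)) where
  carrier := {h | ∃ g ∈ H, (∀ v : Level d n, g v.1 = v.1) ∧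
      ∀ (v : Level d n) (w : Vtx d), g (v.1 ++ w) = v.1 ++ h v w}
  one_mem' := ⟨1, H.one_mem, fun _ => rfl, fun _ _ => rfl⟩
  mul_mem' := by
    rintro a b ⟨g, hg, hgf, hga⟩ ⟨g', hg', hg'f, hg'a⟩
    refine ⟨g * g', H.mul_mem hg hg', fun v => ?_, fun v w => ?_⟩
    · rw [Equiv.Perm.mul_apply, hg'f v, hgf v]
    · rw [Equiv.Perm.mul_apply, hg'a v w, hga v (b v w)]; rfl
  inv_mem' := by
    rintro a ⟨g, hg, hgf, hga⟩
    refine ⟨g⁻¹, H.inv_mem hg, fun v => ?_, fun v w => ?_⟩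
    · apply g.injective
      rw [Equiv.Perm.inv_def, Equiv.apply_symm_apply, hgf v]
    · apply g.injective
      rw [Equiv.Perm.inv_def, Equiv.apply_symm_apply, hga v (a⁻¹ v w)]
      show v.1 ++ w = v.1 ++ a v ((a v)⁻¹ w)
      rw [Equiv.Perm.inv_def, Equiv.apply_symm_apply]

/-- `G ≤ Aut(T)` is regular branch over `K` if it consists of tree automorphisms, is
spherically transitive and self-similar, and `K ≤ G` is a finite-index subgroup such that
`ψ₁(K ∩ Stab(1))` contains `K^d` as a subgroup of finite index. -/
structure IsRegularBranch (d : ℕ) (G K : Subgroup (Equiv.Perm (Vtx d))) : Prop where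
  treeAut : ∀ g ∈ G, IsTreeAut d g
  transitive : SphericallyTransitive G
  selfSimilar : SelfSimilar G
  le : K ≤ G
  relindex_ne_zero : K.relIndex G ≠ 0
  pi_le : Subgroup.pi Set.univ (fun _ : Level d 1 => K) ≤ psiImage K 1
  pi_relindex_ne_zero :
    (Subgroup.pi Set.univ (fun _ : Level d 1 => K)).relIndex (psiImage K 1) ≠ 0

/-- `H` is a weakly maximal subgroup of (the subgroup) `G` if `H ≤ G`, `H` has infinite
index in `G`, and every subgroup of `G` strictly containing `H` has finite index in `G`. -/
def IsWeaklyMaximalIn {P : Type*} [Group P] (G H : Subgroup P) : Prop :=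
  H ≤ G ∧ H.relIndex G = 0 ∧
    ∀ M : Subgroup P, M ≤ G → H < M → M.relIndex G ≠ 0

/-- The stabilizer in `G` of a boundary point `ξ` (a parabolic subgroup). -/
def rayStab {d : ℕ} (G : Subgroup (Equiv.Perm (Vtx d))) (ξ : ℕ → Fin d) :
    Subgroup (Equiv.Perm (Vtx d)) where
  carrier := {g | g ∈ G ∧ ∀ n : ℕ, g (raySegment ξ n) = raySegment ξ n}
  one_mem' := ⟨G.one_mem, fun _ => rfl⟩
  mul_mem' := by
    rintro a b ⟨ha, ha2⟩ ⟨hb, hb2⟩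
    exact ⟨G.mul_mem ha hb, fun n => by rw [Equiv.Perm.mul_apply, hb2 n, ha2 n]⟩
  inv_mem' := by
    rintro a ⟨ha, ha2⟩
    refine ⟨G.inv_mem ha, fun n => ?_⟩
    conv_lhs => rw [← ha2 n]
    exact Equiv.symm_apply_apply a (raySegment ξ n)

/-- The rigid stabilizer of a vertex `v` in `G`: elements of `G` fixing every vertex not
having `v` as a prefix. -/
def rist {d : ℕ} (G : Subgroup (Equiv.Perm (Vtx d))) (v : Vtx d) :
    Subgroup (Equiv.Perm (Vtx d)) where
  carrier := {g | g ∈ G ∧ ∀ w : Vtx d, ¬ v <+: w → g w = w}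
  one_mem' := ⟨G.one_mem, fun _ _ => rfl⟩
  mul_mem' := by
    rintro a b ⟨ha, ha2⟩ ⟨hb, hb2⟩
    exact ⟨G.mul_mem ha hb, fun w hw => by rw [Equiv.Perm.mul_apply, hb2 w hw, ha2 w hw]⟩
  inv_mem' := by
    rintro a ⟨ha, ha2⟩
    refine ⟨G.inv_mem ha, fun w hw => ?_⟩
    conv_lhs => rw [← ha2 w hw]
    exact Equiv.symm_apply_apply a w


section Aux

instance levelFinite (d n : ℕ) : Finite (Level d n) :=
  inferInstanceAs (Finite (List.Vector (Fin d) n))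

lemma mem_psiImage {d : ℕ} {H : Subgroup (Equiv.Perm (Vtx d))} {n : ℕ}
    {h : Level d n → Equiv.Perm (Vtx d)} :
    h ∈ psiImage H n ↔ ∃ g ∈ H, (∀ v : Level d n, g v.1 = v.1) ∧
      ∀ (v : Level d n) (w : Vtx d), g (v.1 ++ w) = v.1 ++ h v w := Iff.rfl

lemma pi_relindex_ne_zero' {P : Type*} [Group P] {ι : Type*} [Finite ι]
    (K G : Subgroup P) (h : K.relIndex G ≠ 0) :
    (Subgroup.pi Set.univ (fun _ : ι => K)).relIndex
      (Subgroup.pi Set.univ (fun _ : ι => G)) ≠ 0 := by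
  classical
  haveI hfin : Finite (↥G ⧸ K.subgroupOf G) := by
    rw [Subgroup.relIndex, Subgroup.index_eq_card] at h
    exact Nat.finite_of_card_ne_zero h
  set piK := Subgroup.pi Set.univ (fun _ : ι => K) with hpiK
  set piG := Subgroup.pi Set.univ (fun _ : ι => G) with hpiG
  rw [Subgroup.relIndex, Subgroup.index_eq_card]
  have hmem : ∀ p : ↥piG, ∀ i : ι, p.1 i ∈ G :=
    fun p i => (Subgroup.mem_pi _).mp p.2 i (Set.mem_univ i)
  let f : ↥piG → ι → (↥G ⧸ K.subgroupOf G) :=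
    fun p i => QuotientGroup.mk ⟨p.1 i, hmem p i⟩
  have key : ∀ p q : ↥piG, p⁻¹ * q ∈ piK.subgroupOf piG ↔ f p = f q := by
    intro p q
    rw [Subgroup.mem_subgroupOf]
    constructor
    · intro hpq
      funext i
      have hi : (p.1 i)⁻¹ * q.1 i ∈ K :=
        (Subgroup.mem_pi _).mp hpq i (Set.mem_univ i)
      exact (QuotientGroup.eq).mpr ((Subgroup.mem_subgroupOf).mpr hi)
    · intro hfq
      refine (Subgroup.mem_pi _).mpr fun i _ => ?_
      have h2 := (QuotientGroup.eq).mp (congrFun hfq i)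
      exact (Subgroup.mem_subgroupOf).mp h2
  let F : (↥piG ⧸ piK.subgroupOf piG) → ι → (↥G ⧸ K.subgroupOf G) :=
    fun x => Quotient.liftOn' x f (fun p q hr =>
      (key p q).mp (QuotientGroup.leftRel_apply.mp hr))
  have hFinj : Function.Injective F := by
    intro x y
    induction x using Quotient.inductionOn' with
    | h p =>
    induction y using Quotient.inductionOn' with
    | h q =>
    intro hxy
    exact Quotient.sound' (QuotientGroup.leftRel_apply.mpr ((key p q).mpr hxy))
  have hfin2 : Finite (↥piG ⧸ piK.subgroupOf piG) := Finite.of_injective F hFinj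
  exact Nat.card_ne_zero.mpr ⟨⟨QuotientGroup.mk 1⟩, hfin2⟩

lemma psiImage_le_pi' {d : ℕ} {G : Subgroup (Equiv.Perm (Vtx d))}
    (hss : SelfSimilar G) (n : ℕ) :
    psiImage G n ≤ Subgroup.pi Set.univ (fun _ : Level d n => G) := by
  intro h hh
  obtain ⟨g, hg, hfix, hsec⟩ := mem_psiImage.mp hh
  refine (Subgroup.mem_pi _).mpr fun v _ => ?_
  obtain ⟨hv, hvG, hvsec⟩ := hss g hg v.1
  have heq : h v = hv := by
    apply Equiv.ext
    intro w
    have hc : v.1 ++ h v w = v.1 ++ hv w := by rw [← hsec v w, hvsec w, hfix v]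
    exact List.append_cancel_left hc
  rw [heq]; exact hvG

lemma piK_le_psiImage' {d : ℕ} {G K : Subgroup (Equiv.Perm (Vtx d))}
    (hGK : IsRegularBranch d G K) :
    ∀ n, Subgroup.pi Set.univ (fun _ : Level d n => K) ≤ psiImage G n := by
  intro n
  induction n with
  | zero =>
    intro k hk
    have hk0 : k ⟨[], rfl⟩ ∈ K := (Subgroup.mem_pi _).mp hk ⟨[], rfl⟩ (Set.mem_univ _)
    refine mem_psiImage.mpr ⟨k ⟨[], rfl⟩, hGK.le hk0, fun v => ?_, fun v w => ?_⟩
    · have hv : v.1 = [] := List.length_eq_zero_iff.mp v.2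
      rw [hv]
      exact (hGK.treeAut _ (hGK.le hk0)).1
    · have hv : v = ⟨[], rfl⟩ := Subtype.ext (List.length_eq_zero_iff.mp v.2)
      rw [hv]
      rfl
  | succ n ih =>
    intro k hk
    have H1' : ∀ u : Level d n, ∃ g, g ∈ K ∧ (∀ x : Level d 1, g x.1 = x.1) ∧
        ∀ (x : Level d 1) (w : Vtx d), g (x.1 ++ w) =
          x.1 ++ k ⟨u.1 ++ x.1, by rw [List.length_append, u.2, x.2]⟩ w := by
      intro u
      have hmem : (fun x : Level d 1 =>
          k ⟨u.1 ++ x.1, by rw [List.length_append, u.2, x.2]⟩)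
          ∈ Subgroup.pi Set.univ (fun _ : Level d 1 => K) :=
        (Subgroup.mem_pi _).mpr fun x _ => (Subgroup.mem_pi _).mp hk _ (Set.mem_univ _)
      exact hGK.pi_le hmem
    choose FF hFK hFfix hFsec using H1'
    have hFpi : FF ∈ Subgroup.pi Set.univ (fun _ : Level d n => K) :=
      (Subgroup.mem_pi _).mpr fun u _ => hFK u
    obtain ⟨g, hgG, hgfix, hgsec⟩ := mem_psiImage.mp (ih hFpi)
    refine mem_psiImage.mpr ⟨g, hgG, fun v => ?_, fun v w => ?_⟩
    all_goals {
      have hne : v.1 ≠ [] := by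
        intro hnil
        have := v.2
        rw [hnil] at this
        simp at this
      have hlu : v.1.dropLast.length = n := by
        rw [List.length_dropLast, v.2]
        omega
      have hvux : v.1.dropLast ++ [v.1.getLast hne] = v.1 :=
        List.dropLast_append_getLast hne
      set u : Level d n := ⟨v.1.dropLast, hlu⟩ with hu
      set x : Fin d := v.1.getLast hne with hx
      have hFfix1 : FF u [x] = [x] := hFfix u ⟨[x], rfl⟩
      have hkv : k ⟨u.1 ++ [x], by rw [List.length_append, u.2]; rfl⟩ = k v := by
        congr 1
        exact Subtype.ext hvux
      have hFsec1 : ∀ w' : Vtx d, FF u ([x] ++ w') = [x] ++ k v w' := by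
        intro w'
        have h1 : FF u ([x] ++ w') =
            [x] ++ k ⟨u.1 ++ [x], by rw [List.length_append, u.2]; rfl⟩ w' :=
          hFsec u ⟨[x], rfl⟩ w'
        rw [h1, hkv]
      first
      | -- fixed-point goal
        calc g v.1 = g (u.1 ++ [x]) := by rw [hvux]
          _ = u.1 ++ FF u [x] := hgsec u [x]
          _ = u.1 ++ [x] := by rw [hFfix1]
          _ = v.1 := hvux
      | -- section goal
        calc g (v.1 ++ w) = g (u.1 ++ ([x] ++ w)) := by
              rw [← List.append_assoc, hvux]
          _ = u.1 ++ FF u ([x] ++ w) := hgsec u ([x] ++ w)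
          _ = u.1 ++ ([x] ++ k v w) := by rw [hFsec1 w]
          _ = (u.1 ++ [x]) ++ k v w := by rw [List.append_assoc]
          _ = v.1 ++ k v w := by rw [hvux]
    }

end Aux

/-- In a regular branch group over `K`, for every `n` the image of `Stab_G(n)` under `ψₙ`
contains `K^{dⁿ}` and is a subgroup of finite index in `G^{dⁿ}`. -/
theorem psiImage_contains_piK_and_finite_index {d : ℕ} (hd : 2 ≤ d)
    (G K : Subgroup (Equiv.Perm (Vtx d))) (hGK : IsRegularBranch d G K) (n : ℕ) :
    Subgroup.pi Set.univ (fun _ : Level d n => K) ≤ psiImage G n ∧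
    psiImage G n ≤ Subgroup.pi Set.univ (fun _ : Level d n => G) ∧
    (psiImage G n).relIndex (Subgroup.pi Set.univ (fun _ : Level d n => G)) ≠ 0 := by
  refine ⟨piK_le_psiImage' hGK n, psiImage_le_pi' hGK.selfSimilar n, fun h0 => ?_⟩
  exact pi_relindex_ne_zero' (ι := Level d n) K G hGK.relindex_ne_zero
    (Subgroup.relIndex_eq_zero_of_le_left (piK_le_psiImage' hGK n) h0)
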